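/- Let (Ω, P) be a probability space and let ε : Fin d → Ω → ℝ be independent random variables, each distributed as a standard Gaussian N(0,1). Let λ : Fin d → ℝ be nonnegative with ∑_i λ_i > 0. Then for every t > 0, P( ω : √(∑_{i} λ_i · (ε_i(ω))²) > t ) ≤ 2 · exp( −t² / (2 ∑_i λ_i) ). -/

import Mathlib

open MeasureTheory ProbabilityTheory

open Real in
lemma hasSum_cosh_sqrt {y : ℝ} (hy : 0 ≤ y) :
    HasSum (fun n : ℕ => y ^ n / (Nat.factorial (2 * n) : ℝ)) (Real.cosh (Real.sqrt y)) := by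
  have h := Real.hasSum_cosh (Real.sqrt y)
  simpa only [pow_mul, Real.sq_sqrt hy] using h

lemma cosh_sqrt_jensen {ι : Type*} (s : Finset ι) (w z : ι → ℝ)
    (hw : ∀ i ∈ s, 0 ≤ w i) (hw' : ∑ i ∈ s, w i = 1) (hz : ∀ i ∈ s, 0 ≤ z i) :
    Real.cosh (Real.sqrt (∑ i ∈ s, w i * z i)) ≤
      ∑ i ∈ s, w i * Real.cosh (Real.sqrt (z i)) := by
  have hT : 0 ≤ ∑ i ∈ s, w i * z i :=
    Finset.sum_nonneg fun i hi => mul_nonneg (hw i hi) (hz i hi)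
  have h1 := hasSum_cosh_sqrt hT
  have h2 : HasSum (fun n : ℕ => ∑ i ∈ s, w i * (z i ^ n / (Nat.factorial (2 * n) : ℝ)))
      (∑ i ∈ s, w i * Real.cosh (Real.sqrt (z i))) :=
    hasSum_sum fun i hi => (hasSum_cosh_sqrt (hz i hi)).mul_left _
  rw [← h1.tsum_eq, ← h2.tsum_eq]
  refine Summable.tsum_le_tsum (fun n => ?_) h1.summable h2.summable
  have hp := Real.pow_arith_mean_le_arith_mean_pow s w z hw hw' hz n
  calc (∑ i ∈ s, w i * z i) ^ n / (Nat.factorial (2 * n) : ℝ)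
      ≤ (∑ i ∈ s, w i * z i ^ n) / (Nat.factorial (2 * n) : ℝ) := by
        gcongr
    _ = ∑ i ∈ s, w i * (z i ^ n / (Nat.factorial (2 * n) : ℝ)) := by
        rw [Finset.sum_div]; exact Finset.sum_congr rfl fun i _ => by ring

lemma gauss_pdf_mul (u x : ℝ) :
    gaussianPDFReal 0 1 x * Real.exp (u * x) =
      Real.exp (u ^ 2 / 2) * gaussianPDFReal u 1 x := by
  simp only [gaussianPDFReal, NNReal.coe_one, mul_one, sub_zero]
  rw [mul_assoc, ← Real.exp_add, mul_comm (Real.exp (u ^ 2 / 2)), mul_assoc, ← Real.exp_add]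
  congr 1
  ring

lemma integrable_exp_mul_gaussian (u : ℝ) :
    Integrable (fun x => Real.exp (u * x)) (gaussianReal 0 1) := by
  rw [gaussianReal_of_var_ne_zero 0 one_ne_zero]
  have hmeas : Measurable fun x => Real.toNNReal (gaussianPDFReal 0 1 x) :=
    (measurable_gaussianPDFReal 0 1).real_toNNReal
  rw [gaussianPDF_def]
  simp only [ENNReal.ofReal]
  rw [integrable_withDensity_iff_integrable_smul hmeas]
  have : (fun x => Real.toNNReal (gaussianPDFReal 0 1 x) • Real.exp (u * x))
      = fun x => Real.exp (u ^ 2 / 2) * gaussianPDFReal u 1 x := by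
    ext x
    rw [NNReal.smul_def, smul_eq_mul, Real.coe_toNNReal _ (gaussianPDFReal_nonneg 0 1 x)]
    exact gauss_pdf_mul u x
  rw [this]
  exact (integrable_gaussianPDFReal u 1).const_mul _

lemma integral_exp_mul_gaussian (u : ℝ) :
    ∫ x, Real.exp (u * x) ∂(gaussianReal 0 1) = Real.exp (u ^ 2 / 2) := by
  rw [gaussianReal_of_var_ne_zero 0 one_ne_zero, gaussianPDF_def]
  have hmeas : Measurable fun x => Real.toNNReal (gaussianPDFReal 0 1 x) :=
    (measurable_gaussianPDFReal 0 1).real_toNNReal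
  simp only [ENNReal.ofReal]
  rw [integral_withDensity_eq_integral_smul hmeas]
  have : (fun x => Real.toNNReal (gaussianPDFReal 0 1 x) • Real.exp (u * x))
      = fun x => Real.exp (u ^ 2 / 2) * gaussianPDFReal u 1 x := by
    ext x
    rw [NNReal.smul_def, smul_eq_mul, Real.coe_toNNReal _ (gaussianPDFReal_nonneg 0 1 x)]
    exact gauss_pdf_mul u x
  rw [this, integral_const_mul, integral_gaussianPDFReal_eq_one u one_ne_zero, mul_one]

lemma integrable_cosh_mul_gaussian (u : ℝ) :
    Integrable (fun x => Real.cosh (u * x)) (gaussianReal 0 1) := by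
  have h : (fun x => Real.cosh (u * x))
      = fun x => (Real.exp (u * x) + Real.exp (-u * x)) / 2 := by
    ext x; rw [Real.cosh_eq]; ring_nf
  rw [h]
  exact (((integrable_exp_mul_gaussian u).add (integrable_exp_mul_gaussian (-u))).div_const 2)

lemma integral_cosh_mul_gaussian (u : ℝ) :
    ∫ x, Real.cosh (u * x) ∂(gaussianReal 0 1) = Real.exp (u ^ 2 / 2) := by
  have h : (fun x => Real.cosh (u * x))
      = fun x => (Real.exp (u * x) + Real.exp (-u * x)) / 2 := by
    ext x; rw [Real.cosh_eq]; ring_nf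
  rw [h]
  rw [integral_div, integral_add (integrable_exp_mul_gaussian u) (integrable_exp_mul_gaussian (-u)),
    integral_exp_mul_gaussian, integral_exp_mul_gaussian]
  rw [neg_pow]
  ring_nf

/-- Tail bound for the norm of a Gaussian vector: if `ε i` are independent standard Gaussians
and `λ i ≥ 0` with positive sum, then
`P(√(∑ λ i ε i²) > t) ≤ 2 exp(-t² / (2 ∑ λ i))` for every `t > 0`. -/
theorem gaussian_norm_tail_bound {Ω : Type*} [MeasureSpace Ω]
    [IsProbabilityMeasure (ℙ : Measure Ω)] {d : ℕ}
    (ε : Fin d → Ω → ℝ) (hmeas : ∀ i, Measurable (ε i))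
    (hindep : iIndepFun ε ℙ)
    (hgauss : ∀ i, Measure.map (ε i) ℙ = gaussianReal 0 1)
    (lam : Fin d → ℝ) (hlam : ∀ i, 0 ≤ lam i) (hsum : 0 < ∑ i, lam i)
    (t : ℝ) (ht : 0 < t) :
    (ℙ {ω | t < Real.sqrt (∑ i, lam i * (ε i ω) ^ 2)}).toReal ≤
      2 * Real.exp (-t ^ 2 / (2 * ∑ i, lam i)) := by
  set S : ℝ := ∑ i, lam i with hS_def
  have hS : 0 < S := hsum
  set c : ℝ := t / S with hc_def
  have hc : 0 < c := div_pos ht hS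
  set b : ℝ := c * Real.sqrt S with hb_def
  have hb2 : b ^ 2 = c ^ 2 * S := by
    rw [hb_def, mul_pow, Real.sq_sqrt hS.le]
  set X : Ω → ℝ := fun ω => Real.sqrt (∑ i, lam i * (ε i ω) ^ 2) with hX_def
  have hXnn : ∀ ω, 0 ≤ X ω := fun ω => Real.sqrt_nonneg _
  -- the weights
  have hwnn : ∀ i : Fin d, 0 ≤ lam i / S := fun i => div_nonneg (hlam i) hS.le
  have hwsum : ∑ i : Fin d, lam i / S = 1 := by
    rw [← Finset.sum_div, ← hS_def, div_self hS.ne']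
  -- pointwise Jensen bound
  have hkey : ∀ ω, Real.cosh (c * X ω) ≤
      ∑ i, (lam i / S) * Real.cosh (b * ε i ω) := by
    intro ω
    have hQnn : ∀ i : Fin d, (0:ℝ) ≤ lam i * (ε i ω) ^ 2 :=
      fun i => mul_nonneg (hlam i) (sq_nonneg _)
    have hQ : 0 ≤ ∑ i, lam i * (ε i ω) ^ 2 := Finset.sum_nonneg fun i _ => hQnn i
    have h1 : c * X ω = Real.sqrt (∑ i, (lam i / S) * (b * ε i ω) ^ 2) := by
      have h2 : (∑ i, (lam i / S) * (b * ε i ω) ^ 2)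
          = c ^ 2 * ∑ i, lam i * (ε i ω) ^ 2 := by
        rw [Finset.mul_sum]
        refine Finset.sum_congr rfl fun i _ => ?_
        rw [mul_pow, hb2]
        field_simp
      rw [h2, Real.sqrt_mul (sq_nonneg c), Real.sqrt_sq hc.le]
    rw [h1]
    calc Real.cosh (Real.sqrt (∑ i, (lam i / S) * (b * ε i ω) ^ 2))
        ≤ ∑ i, (lam i / S) * Real.cosh (Real.sqrt ((b * ε i ω) ^ 2)) :=
          cosh_sqrt_jensen Finset.univ _ _ (fun i _ => hwnn i) hwsum
            (fun i _ => sq_nonneg _)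
      _ = ∑ i, (lam i / S) * Real.cosh (b * ε i ω) := by
          refine Finset.sum_congr rfl fun i _ => ?_
          rw [Real.sqrt_sq_eq_abs, Real.cosh_abs]
  -- measurability
  have hXm : Measurable X := by
    apply Measurable.sqrt
    exact Finset.measurable_sum Finset.univ fun i _ => ((hmeas i).pow_const 2).const_mul _
  have hcoshXm : Measurable fun ω => Real.cosh (c * X ω) :=
    Real.continuous_cosh.measurable.comp (hXm.const_mul c)
  have hcont : Continuous fun x : ℝ => Real.cosh (b * x) :=
    Real.continuous_cosh.comp (continuous_const.mul continuous_id)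
  -- integrability of the dominating sum
  have hgi : ∀ i : Fin d, Integrable (fun ω => Real.cosh (b * ε i ω)) ℙ := by
    intro i
    have h := integrable_cosh_mul_gaussian b
    rw [← hgauss i] at h
    exact (integrable_map_measure hcont.aestronglyMeasurable (hmeas i).aemeasurable).mp h
  have hg : Integrable (fun ω => ∑ i, (lam i / S) * Real.cosh (b * ε i ω)) ℙ :=
    integrable_finset_sum _ fun i _ => ((hgi i).const_mul _)
  have hInt : Integrable (fun ω => Real.cosh (c * X ω)) ℙ := by
    refine hg.mono' hcoshXm.aestronglyMeasurable (ae_of_all _ fun ω => ?_)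
    rw [Real.norm_eq_abs, abs_of_pos (Real.cosh_pos _)]
    exact hkey ω
  -- the per-coordinate integrals
  have hIi : ∀ i : Fin d, ∫ ω, Real.cosh (b * ε i ω) ∂ℙ = Real.exp (b ^ 2 / 2) := by
    intro i
    rw [← integral_cosh_mul_gaussian b, ← hgauss i,
      integral_map (hmeas i).aemeasurable hcont.aestronglyMeasurable]
  -- bound on the integral
  have hIbound : ∫ ω, Real.cosh (c * X ω) ∂ℙ ≤ Real.exp (b ^ 2 / 2) := by
    calc ∫ ω, Real.cosh (c * X ω) ∂ℙ
        ≤ ∫ ω, ∑ i, (lam i / S) * Real.cosh (b * ε i ω) ∂ℙ :=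
          integral_mono hInt hg hkey
      _ = ∑ i, (lam i / S) * ∫ ω, Real.cosh (b * ε i ω) ∂ℙ := by
          rw [integral_finset_sum _ fun i _ => (hgi i).const_mul _]
          exact Finset.sum_congr rfl fun i _ => integral_const_mul _ _
      _ = Real.exp (b ^ 2 / 2) := by
          simp_rw [hIi]
          rw [← Finset.sum_mul, hwsum, one_mul]
  -- Markov / Chernoff
  have hsub : {ω | t < X ω} ⊆ {ω | Real.cosh (c * t) ≤ Real.cosh (c * X ω)} := by
    intro ω hω
    have h1 : c * t ≤ c * X ω := mul_le_mul_of_nonneg_left (le_of_lt hω) hc.le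
    exact Real.cosh_le_cosh.2 (by
      rw [abs_of_pos (mul_pos hc ht), abs_of_nonneg (mul_nonneg hc.le (hXnn ω))]
      exact h1)
  have hmarkov := mul_meas_ge_le_integral_of_nonneg
    (f := fun ω => Real.cosh (c * X ω)) (μ := ℙ)
    (ae_of_all _ fun ω => (Real.cosh_pos _).le) hInt (Real.cosh (c * t))
  have hmono : (ℙ {ω | t < X ω}).toReal
      ≤ (ℙ {ω | Real.cosh (c * t) ≤ Real.cosh (c * X ω)}).toReal :=
    ENNReal.toReal_mono (measure_ne_top _ _) (measure_mono hsub)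
  have hchpos : 0 < Real.cosh (c * t) := Real.cosh_pos _
  have hstep : (ℙ {ω | t < X ω}).toReal ≤ Real.exp (b ^ 2 / 2) / Real.cosh (c * t) := by
    rw [le_div_iff₀ hchpos]
    calc (ℙ {ω | t < X ω}).toReal * Real.cosh (c * t)
        ≤ (ℙ {ω | Real.cosh (c * t) ≤ Real.cosh (c * X ω)}).toReal * Real.cosh (c * t) :=
          mul_le_mul_of_nonneg_right hmono hchpos.le
      _ = Real.cosh (c * t) * (ℙ {ω | Real.cosh (c * t) ≤ Real.cosh (c * X ω)}).toReal := by ring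
      _ ≤ ∫ ω, Real.cosh (c * X ω) ∂ℙ := hmarkov
      _ ≤ Real.exp (b ^ 2 / 2) := hIbound
  refine hstep.trans ?_
  -- final computation
  have hcosh_lb : Real.exp (c * t) / 2 ≤ Real.cosh (c * t) := by
    rw [Real.cosh_eq]
    have := (Real.exp_pos (-(c * t))).le
    linarith
  have h2 : Real.exp (b ^ 2 / 2) / Real.cosh (c * t)
      ≤ Real.exp (b ^ 2 / 2) / (Real.exp (c * t) / 2) :=
    div_le_div_of_nonneg_left (Real.exp_pos _).le (by positivity) hcosh_lb
  refine h2.trans ?_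
  have hb22 : b ^ 2 / 2 = t ^ 2 / (2 * S) := by
    rw [hb2, hc_def]
    field_simp
  have hct : c * t = t ^ 2 / S := by
    rw [hc_def]; field_simp
  rw [hb22, hct, div_div_eq_mul_div, div_le_iff₀ (by positivity)]
  have harg : -t ^ 2 / (2 * S) + t ^ 2 / S = t ^ 2 / (2 * S) := by
    field_simp
    ring
  rw [mul_assoc, ← Real.exp_add, harg]
  linarith
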